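/- Let S be a nonnegative integrable random variable on a probability space with m := 1 − E[S] ∈ [0,1), fix T > 0 and let α ∈ [0,1] be such that α·m = 0 (i.e. either α = 0, or m = 0 in which case any α ∈ [0,1] is allowed and Put- and Call-implied volatilities coincide). Let x₀ ∈ ℝ and let I : ℝ → [0,∞) be any function satisfying C_BS(x, I(x)) = E[(S − e^x)₊] + α·m for all x ≥ x₀. Then I(x) − √(2x/T) tends to −∞ as x → ∞. -/

import Mathlib

open MeasureTheory Filter
open Topology

/-- Standard normal cumulative distribution function. -/
noncomputable def stdNormalCDF (y : ℝ) : ℝ :=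
  ∫ t in Set.Iic y, Real.exp (-t ^ 2 / 2) / Real.sqrt (2 * Real.pi)

/-- Black-Scholes d₊ (maturity `T`, log-strike `x`, volatility `σ`). -/
noncomputable def dplus (T x σ : ℝ) : ℝ := -x / (σ * Real.sqrt T) + σ * Real.sqrt T / 2

/-- Black-Scholes d₋ (maturity `T`, log-strike `x`, volatility `σ`). -/
noncomputable def dminus (T x σ : ℝ) : ℝ := -x / (σ * Real.sqrt T) - σ * Real.sqrt T / 2

/-- Black-Scholes Call price (maturity `T`, log-strike `x`, volatility `σ`),
with the convention `CBS T x 0 = max (1 - exp x) 0`. -/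
noncomputable def CBS (T x σ : ℝ) : ℝ :=
  if σ = 0 then max (1 - Real.exp x) 0
  else stdNormalCDF (dplus T x σ) - Real.exp x * stdNormalCDF (dminus T x σ)

/-- Black-Scholes Put price (maturity `T`, log-strike `x`, volatility `σ`),
with the convention `PBS T x 0 = max (exp x - 1) 0`. -/
noncomputable def PBS (T x σ : ℝ) : ℝ :=
  if σ = 0 then max (Real.exp x - 1) 0
  else Real.exp x * stdNormalCDF (-dminus T x σ) - stdNormalCDF (-dplus T x σ)


noncomputable def stdGaussPDF (t : ℝ) : ℝ := Real.exp (-t ^ 2 / 2) / Real.sqrt (2 * Real.pi)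

lemma stdGaussPDF_pos (t : ℝ) : 0 < stdGaussPDF t := by
  unfold stdGaussPDF
  positivity

lemma stdGaussPDF_eq (t : ℝ) :
    stdGaussPDF t = Real.exp (-(1/2) * t ^ 2) / Real.sqrt (2 * Real.pi) := by
  unfold stdGaussPDF; ring_nf

lemma integrable_stdGaussPDF : Integrable stdGaussPDF := by
  have h := (integrable_exp_neg_mul_sq (by norm_num : (0:ℝ) < 1/2)).div_const
    (Real.sqrt (2 * Real.pi))
  exact h.congr (by filter_upwards with t using by rw [stdGaussPDF_eq])

lemma stdNormalCDF_eq (y : ℝ) : stdNormalCDF y = ∫ t in Set.Iic y, stdGaussPDF t := rfl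

lemma hasDerivAt_stdNormalCDF (y : ℝ) : HasDerivAt stdNormalCDF (stdGaussPDF y) y := by
  have hint : ∀ a : ℝ, IntegrableOn stdGaussPDF (Set.Iic a) :=
    fun a => integrable_stdGaussPDF.integrableOn
  have hcont : Continuous stdGaussPDF := by
    unfold stdGaussPDF
    fun_prop
  have key : ∀ z : ℝ, stdNormalCDF z = stdNormalCDF 0 + ∫ t in (0:ℝ)..z, stdGaussPDF t := by
    intro z
    rw [stdNormalCDF_eq, stdNormalCDF_eq]
    have := intervalIntegral.integral_Iic_sub_Iic (hint 0) (hint z)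
    linarith
  have h1 : HasDerivAt (fun z => stdNormalCDF 0 + ∫ t in (0:ℝ)..z, stdGaussPDF t)
      (stdGaussPDF y) y := by
    refine HasDerivAt.const_add _ ?_
    exact intervalIntegral.integral_hasDerivAt_right
      (hcont.intervalIntegrable 0 y)
      (hcont.stronglyMeasurableAtFilter _ _)
      hcont.continuousAt
  exact (funext key ▸ h1 : HasDerivAt stdNormalCDF (stdGaussPDF y) y)

lemma continuous_stdNormalCDF : Continuous stdNormalCDF :=
  continuous_iff_continuousAt.2 fun y => (hasDerivAt_stdNormalCDF y).continuousAt

lemma stdNormalCDF_pos (y : ℝ) : 0 < stdNormalCDF y := by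
  rw [stdNormalCDF_eq]
  rw [setIntegral_pos_iff_support_of_nonneg_ae]
  · have : Function.support stdGaussPDF = Set.univ := by
      ext t; simp [Function.support, (stdGaussPDF_pos t).ne']
    rw [this, Set.univ_inter]
    simp [Real.volume_Iic]
  · filter_upwards with t using (stdGaussPDF_pos t).le
  · exact integrable_stdGaussPDF.integrableOn

lemma tendsto_exp_neg_sq_atBot : Tendsto (fun s : ℝ => Real.exp (-s ^ 2 / 2)) atBot (𝓝 0) := by
  have h0 : Tendsto (fun s : ℝ => -s) atBot atTop := tendsto_neg_atBot_atTop
  have h1 : Tendsto (fun s : ℝ => s ^ 2) atBot atTop :=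
    ((tendsto_pow_atTop (by norm_num : 2 ≠ 0)).comp h0).congr fun s => by
      simp [Function.comp, neg_sq]
  have h2 : Tendsto (fun s : ℝ => -s ^ 2) atBot atBot := tendsto_neg_atTop_atBot.comp h1
  exact Real.tendsto_exp_atBot.comp (h2.atBot_div_const (by norm_num))

lemma integrable_neg_mul_exp : Integrable (fun t : ℝ => -t * Real.exp (-t ^ 2 / 2)) := by
  have h0 : Integrable (fun x : ℝ => x * Real.exp (-x ^ 2 / 2)) := by
    refine (integrable_mul_exp_neg_mul_sq (by norm_num : (0:ℝ) < 1/2)).congr ?_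
    filter_upwards with t
    ring_nf
  exact h0.neg'.congr (by filter_upwards with t using by ring)

lemma integral_Iic_neg_mul_exp (a : ℝ) :
    (∫ t in Set.Iic a, -t * Real.exp (-t ^ 2 / 2)) = Real.exp (-a ^ 2 / 2) := by
  have hderiv : ∀ t ∈ Set.Iic a, HasDerivAt (fun s : ℝ => Real.exp (-s ^ 2 / 2))
      (-t * Real.exp (-t ^ 2 / 2)) t := by
    intro t _
    have h1 : HasDerivAt (fun s : ℝ => -s ^ 2 / 2) (-t) t := by
      have h2 := ((hasDerivAt_pow 2 t).neg).div_const 2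
      refine h2.congr_deriv ?_
      simp
      ring
    simpa [mul_comm] using h1.exp
  have := integral_Iic_of_hasDerivAt_of_tendsto' hderiv
    integrable_neg_mul_exp.integrableOn tendsto_exp_neg_sq_atBot
  rw [this, sub_zero]

lemma stdNormalCDF_neg_le {y : ℝ} (hy : 0 < y) :
    stdNormalCDF (-y) ≤ Real.exp (-y ^ 2 / 2) / (y * Real.sqrt (2 * Real.pi)) := by
  have hπ : 0 < Real.sqrt (2 * Real.pi) := Real.sqrt_pos.2 (by positivity)
  have hint2 : Integrable (fun t : ℝ => (-t / y) * stdGaussPDF t) := by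
    refine ((integrable_neg_mul_exp.div_const (y * Real.sqrt (2 * Real.pi))).congr ?_)
    filter_upwards with t
    unfold stdGaussPDF
    field_simp
    try ring
  calc stdNormalCDF (-y) = ∫ t in Set.Iic (-y), stdGaussPDF t := stdNormalCDF_eq _
    _ ≤ ∫ t in Set.Iic (-y), (-t / y) * stdGaussPDF t := by
        refine setIntegral_mono_on integrable_stdGaussPDF.integrableOn
          hint2.integrableOn measurableSet_Iic ?_
        intro t ht
        simp only [Set.mem_Iic] at ht
        have h1 : 1 ≤ -t / y := by rw [le_div_iff₀ hy]; linarith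
        nlinarith [stdGaussPDF_pos t]
    _ = (∫ t in Set.Iic (-y), -t * Real.exp (-t ^ 2 / 2)) / (y * Real.sqrt (2 * Real.pi)) := by
        rw [← integral_div]
        refine setIntegral_congr_fun measurableSet_Iic fun t _ => ?_
        unfold stdGaussPDF
        field_simp
        try ring
    _ = Real.exp (-y ^ 2 / 2) / (y * Real.sqrt (2 * Real.pi)) := by
        rw [integral_Iic_neg_mul_exp]
        try ring_nf

lemma exp_mul_pdf_dminus (T x σ : ℝ) (hT : 0 < T) (hσ : σ ≠ 0) :
    Real.exp x * stdGaussPDF (dminus T x σ) = stdGaussPDF (dplus T x σ) := by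
  have hsT : Real.sqrt T ≠ 0 := (Real.sqrt_pos.2 hT).ne'
  have hu : σ * Real.sqrt T ≠ 0 := mul_ne_zero hσ hsT
  unfold stdGaussPDF
  rw [mul_div_assoc', ← Real.exp_add]
  congr 2
  unfold dplus dminus
  field_simp
  ring

lemma hasDerivAt_dplus (T x : ℝ) {σ : ℝ} (hσ : σ ≠ 0) :
    HasDerivAt (fun s => dplus T x s) (x / Real.sqrt T / σ ^ 2 + Real.sqrt T / 2) σ := by
  have hfun : ∀ s : ℝ, dplus T x s = (-x / Real.sqrt T) * s⁻¹ + s * (Real.sqrt T / 2) := by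
    intro s
    unfold dplus
    rcases eq_or_ne s 0 with rfl | hs
    · simp
    · rcases eq_or_ne (Real.sqrt T) 0 with h | h
      · simp [h]
      · field_simp
  simp only [funext hfun]
  have h := ((hasDerivAt_inv hσ).const_mul (-x / Real.sqrt T)).add
    ((hasDerivAt_id σ).mul_const (Real.sqrt T / 2))
  refine h.congr_deriv ?_
  field_simp
  try ring

lemma hasDerivAt_dminus (T x : ℝ) {σ : ℝ} (hσ : σ ≠ 0) :
    HasDerivAt (fun s => dminus T x s) (x / Real.sqrt T / σ ^ 2 - Real.sqrt T / 2) σ := by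
  have hfun : ∀ s : ℝ, dminus T x s = (-x / Real.sqrt T) * s⁻¹ - s * (Real.sqrt T / 2) := by
    intro s
    unfold dminus
    rcases eq_or_ne s 0 with rfl | hs
    · simp
    · rcases eq_or_ne (Real.sqrt T) 0 with h | h
      · simp [h]
      · field_simp
  simp only [funext hfun]
  have h := ((hasDerivAt_inv hσ).const_mul (-x / Real.sqrt T)).sub
    ((hasDerivAt_id σ).mul_const (Real.sqrt T / 2))
  refine h.congr_deriv ?_
  field_simp
  try ring

lemma hasDerivAt_CBS_sigma (T x : ℝ) (hT : 0 < T) {σ : ℝ} (hσ : 0 < σ) :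
    HasDerivAt (fun s => CBS T x s) (stdGaussPDF (dplus T x σ) * Real.sqrt T) σ := by
  have hF : HasDerivAt
      (fun s => stdNormalCDF (dplus T x s) - Real.exp x * stdNormalCDF (dminus T x s))
      (stdGaussPDF (dplus T x σ) * Real.sqrt T) σ := by
    have h1 := (hasDerivAt_stdNormalCDF (dplus T x σ)).comp σ (hasDerivAt_dplus T x hσ.ne')
    have h2 := ((hasDerivAt_stdNormalCDF (dminus T x σ)).comp σ
      (hasDerivAt_dminus T x hσ.ne')).const_mul (Real.exp x)
    have h3 := h1.sub h2
    refine h3.congr_deriv ?_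
    have key := exp_mul_pdf_dminus T x σ hT hσ.ne'
    linear_combination -(x / Real.sqrt T / σ ^ 2 - Real.sqrt T / 2) * key
  refine hF.congr_of_eventuallyEq ?_
  filter_upwards [eventually_ne_nhds hσ.ne'] with s hs
  simp [CBS, hs]

lemma CBS_mono (T x : ℝ) (hT : 0 < T) {a b : ℝ} (ha : 0 < a) (hab : a ≤ b) :
    CBS T x a ≤ CBS T x b := by
  have hder : ∀ s ∈ Set.Ici a, HasDerivAt (fun u => CBS T x u)
      (stdGaussPDF (dplus T x s) * Real.sqrt T) s :=
    fun s hs => hasDerivAt_CBS_sigma T x hT (lt_of_lt_of_le ha hs)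
  have hmono : StrictMonoOn (fun u => CBS T x u) (Set.Ici a) := by
    apply strictMonoOn_of_deriv_pos (convex_Ici a)
    · exact fun s hs => (hder s hs).continuousAt.continuousWithinAt
    · intro s hs
      rw [interior_Ici] at hs
      rw [(hder s (Set.Ioi_subset_Ici_self hs)).deriv]
      have := stdGaussPDF_pos (dplus T x s)
      have := Real.sqrt_pos.2 hT
      positivity
  rcases eq_or_lt_of_le hab with rfl | h
  · exact le_rfl
  · exact (hmono Set.self_mem_Ici hab h).le

lemma tendsto_sqrt_two_mul : Tendsto (fun x : ℝ => Real.sqrt (2 * x)) atTop atTop := by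
  rw [tendsto_atTop]
  intro b
  filter_upwards [eventually_ge_atTop ((max b 0) ^ 2 / 2)] with x hx
  have h1 : max b 0 = Real.sqrt ((max b 0) ^ 2) := (Real.sqrt_sq (le_max_right b 0)).symm
  calc b ≤ max b 0 := le_max_left b 0
    _ = Real.sqrt ((max b 0) ^ 2) := h1
    _ ≤ Real.sqrt (2 * x) := Real.sqrt_le_sqrt (by linarith)

lemma CBS_curve_tendsto (T c : ℝ) (hT : 0 < T) (hc : 0 < c) :
    Tendsto (fun x => CBS T x (Real.sqrt (2 * x / T) - c)) atTop
      (𝓝 (stdNormalCDF (-(c * Real.sqrt T)))) := by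
  have hr : 0 < Real.sqrt T := Real.sqrt_pos.2 hT
  set r := Real.sqrt T with hrdef
  set k := c * r with hkdef
  have hk0 : 0 < k := by positivity
  set u : ℝ → ℝ := fun x => Real.sqrt (2 * x) with hudef
  have hu : Tendsto u atTop atTop := tendsto_sqrt_two_mul
  -- eventual basic facts
  have hev : ∀ᶠ x : ℝ in atTop, k + 1 ≤ u x ∧ u x ^ 2 = 2 * x ∧
      Real.sqrt (2 * x / T) - c = (u x - k) / r := by
    filter_upwards [eventually_ge_atTop ((k + 1) ^ 2 / 2), eventually_ge_atTop 0] with x hx1 hx0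
    have hx2 : u x ^ 2 = 2 * x := Real.sq_sqrt (by linarith)
    refine ⟨?_, hx2, ?_⟩
    · have h1 : ((k + 1) : ℝ) = Real.sqrt ((k + 1) ^ 2) := (Real.sqrt_sq (by positivity)).symm
      rw [h1]
      exact Real.sqrt_le_sqrt (by linarith)
    · rw [Real.sqrt_div (by linarith : (0:ℝ) ≤ 2 * x) T]
      rw [eq_div_iff hr.ne', sub_mul, div_mul_cancel₀ _ hr.ne']
  -- limit of dplus along the curve
  have hgd : Tendsto (fun v : ℝ => (k ^ 2 - 2 * k * v) / (2 * (v - k))) atTop (𝓝 (-k)) := by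
    have hnum : Tendsto (fun v : ℝ => k ^ 2 / v - 2 * k) atTop (𝓝 (0 - 2 * k)) :=
      (tendsto_const_nhds.div_atTop tendsto_id).sub_const _
    have hden : Tendsto (fun v : ℝ => 2 - 2 * k / v) atTop (𝓝 (2 - 0)) :=
      tendsto_const_nhds.sub (tendsto_const_nhds.div_atTop tendsto_id)
    have h := hnum.div hden (by norm_num)
    have h2 : (0 - 2 * k) / (2 - 0) = -k := by ring
    rw [h2] at h
    refine h.congr' ?_
    filter_upwards [eventually_gt_atTop (max k 0 + 1)] with v hv
    have hv0 : (0:ℝ) < v := by have := le_max_right k (0:ℝ); linarith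
    have hvk : 0 < v - k := by have := le_max_left k (0:ℝ); linarith
    have hden2 : (0:ℝ) < 2 - 2 * k / v := by
      have hkv : k / v < 1 := (div_lt_one hv0).2 (by linarith)
      have h2kv : 2 * k / v = 2 * (k / v) := by ring
      linarith
    show (k ^ 2 / v - 2 * k) / (2 - 2 * k / v) = (k ^ 2 - 2 * k * v) / (2 * (v - k))
    rw [div_eq_div_iff hden2.ne' (by positivity)]
    field_simp
  have hdp : Tendsto (fun x => dplus T x (Real.sqrt (2 * x / T) - c)) atTop (𝓝 (-k)) := by
    refine (hgd.comp hu).congr' ?_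
    filter_upwards [hev] with x ⟨h1, h2, h3⟩
    have huk : u x - k ≠ 0 := by nlinarith
    simp only [Function.comp]
    rw [h3]
    unfold dplus
    rw [div_mul_cancel₀ _ hr.ne']
    field_simp
    nlinarith [h2]
  -- the dminus term tends to 0
  set W : ℝ → ℝ := fun x => (u x ^ 2 + (u x - k) ^ 2) / (2 * (u x - k)) with hWdef
  have hWlb : ∀ᶠ x : ℝ in atTop, (u x - k) / 2 ≤ W x ∧ u x ≤ W x ∧ 0 < u x - k ∧
      dminus T x (Real.sqrt (2 * x / T) - c) = -W x ∧ u x ^ 2 = 2 * x := by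
    filter_upwards [hev] with x ⟨h1, h2, h3⟩
    have huk : 0 < u x - k := by linarith
    constructor
    · rw [hWdef, div_le_div_iff₀ (by norm_num) (by linarith)]
      nlinarith [sq_nonneg (u x)]
    refine ⟨?_, huk, ?_, h2⟩
    · rw [hWdef, le_div_iff₀ (by linarith)]
      nlinarith [sq_nonneg k]
    · rw [h3]
      unfold dminus
      rw [div_mul_cancel₀ _ hr.ne', hWdef]
      field_simp
      nlinarith [h2]
  have hW : Tendsto W atTop atTop := by
    apply tendsto_atTop_mono' atTop (hWlb.mono fun x hx => hx.1)
    apply Tendsto.atTop_div_const (by norm_num)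
    exact tendsto_atTop_add_const_right _ _ hu
  have hprod : Tendsto (fun x => Real.exp x *
      stdNormalCDF (dminus T x (Real.sqrt (2 * x / T) - c))) atTop (𝓝 0) := by
    have hπ : 0 < Real.sqrt (2 * Real.pi) := Real.sqrt_pos.2 (by positivity)
    have hub : Tendsto (fun x => 1 / (W x * Real.sqrt (2 * Real.pi))) atTop (𝓝 0) :=
      tendsto_const_nhds.div_atTop (hW.atTop_mul_const hπ)
    apply tendsto_of_tendsto_of_tendsto_of_le_of_le' tendsto_const_nhds hub
    · filter_upwards with x
      exact mul_nonneg (Real.exp_pos x).le (stdNormalCDF_pos _).le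
    · filter_upwards [hWlb] with x ⟨hx1, hx2, hx3, hx4, hx5⟩
      have hW0 : 0 < W x := lt_of_lt_of_le (by positivity : (0:ℝ) < (u x - k)/2 + 0) (by linarith)
      rw [hx4]
      calc Real.exp x * stdNormalCDF (-W x)
          ≤ Real.exp x * (Real.exp (-W x ^ 2 / 2) / (W x * Real.sqrt (2 * Real.pi))) := by
            exact mul_le_mul_of_nonneg_left (stdNormalCDF_neg_le hW0) (Real.exp_pos x).le
        _ = Real.exp (x + -W x ^ 2 / 2) / (W x * Real.sqrt (2 * Real.pi)) := by
            rw [Real.exp_add]; ring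
        _ ≤ 1 / (W x * Real.sqrt (2 * Real.pi)) := by
            have hu0 : 0 ≤ u x := Real.sqrt_nonneg _
            have hexp : Real.exp (x + -W x ^ 2 / 2) ≤ 1 := by
              rw [← Real.exp_zero]
              apply Real.exp_le_exp.2
              nlinarith
            exact div_le_div_of_nonneg_right hexp (by positivity) |>.trans_eq rfl
  -- assemble
  have hplus : Tendsto (fun x => stdNormalCDF (dplus T x (Real.sqrt (2 * x / T) - c))) atTop
      (𝓝 (stdNormalCDF (-k))) := (continuous_stdNormalCDF.tendsto _).comp hdp
  have hsub := hplus.sub hprod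
  rw [sub_zero] at hsub
  refine hsub.congr' ?_
  filter_upwards [hev] with x ⟨h1, h2, h3⟩
  have hσ : Real.sqrt (2 * x / T) - c ≠ 0 := by
    rw [h3]
    have : 0 < (u x - k) / r := by apply div_pos (by linarith) hr
    exact this.ne'
  simp [CBS, hσ]

lemma call_tendsto_zero {Ω : Type*} [MeasurableSpace Ω] (μ : Measure Ω) [IsProbabilityMeasure μ]
    (S : Ω → ℝ) (hS : ∀ ω, 0 ≤ S ω) (hSint : Integrable S μ) :
    Tendsto (fun x : ℝ => ∫ ω, max (S ω - Real.exp x) 0 ∂μ) atTop (𝓝 0) := by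
  have h := tendsto_integral_filter_of_dominated_convergence (μ := μ) (l := atTop)
    (F := fun x ω => max (S ω - Real.exp x) 0) (f := fun _ => (0:ℝ)) S
    ?_ ?_ hSint ?_
  · simpa using h
  · filter_upwards with x
    exact ((hSint.aemeasurable.sub aemeasurable_const).max aemeasurable_const).aestronglyMeasurable
  · filter_upwards with x
    filter_upwards with ω
    rw [Real.norm_eq_abs, abs_of_nonneg (le_max_right _ _)]
    have := Real.exp_pos x
    rcases le_or_gt (S ω - Real.exp x) 0 with h | h
    · rw [max_eq_right h]; exact hS ω
    · rw [max_eq_left h.le]; linarith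
  · filter_upwards with ω
    refine Tendsto.congr' ?_ tendsto_const_nhds
    filter_upwards [Real.tendsto_exp_atTop.eventually_ge_atTop (S ω)] with x hx
    rw [max_eq_right (by linarith)]

/-- in the degenerate case `α·m = 0` (uncollateralised Call, or true
martingale), `I(x) - √(2x/T)` tends to `-∞` as `x → ∞`. -/
theorem iv_right_wing_degenerate_case
    {Ω : Type*} [MeasurableSpace Ω] (μ : Measure Ω) [IsProbabilityMeasure μ]
    (S : Ω → ℝ) (hS : ∀ ω, 0 ≤ S ω) (hSint : Integrable S μ)
    (m : ℝ) (hm : m = 1 - ∫ ω, S ω ∂μ) (hm0 : 0 ≤ m) (hm1 : m < 1)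
    (T : ℝ) (hT : 0 < T) (α : ℝ) (hα : α ∈ Set.Icc (0:ℝ) 1) (hαm : α * m = 0)
    (x₀ : ℝ) (I : ℝ → ℝ) (hInonneg : ∀ x, 0 ≤ I x)
    (hI : ∀ x : ℝ, x₀ ≤ x →
      CBS T x (I x) = (∫ ω, max (S ω - Real.exp x) 0 ∂μ) + α * m) :
    Tendsto (fun x => I x - Real.sqrt (2 * x / T)) atTop atBot := by
  rw [tendsto_atBot]
  intro b
  set c := max 1 (-b) with hcdef
  have hc : 0 < c := lt_of_lt_of_le one_pos (le_max_left _ _)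
  have hcb : -c ≤ b := by
    have := le_max_right 1 (-b)
    linarith
  set k := c * Real.sqrt T with hkdef
  have hδ : 0 < stdNormalCDF (-k) := stdNormalCDF_pos _
  have h1 := CBS_curve_tendsto T c hT hc
  have h2 := call_tendsto_zero μ S hS hSint
  have hev1 : ∀ᶠ x : ℝ in atTop, stdNormalCDF (-k) / 2 < CBS T x (Real.sqrt (2 * x / T) - c) :=
    h1.eventually (eventually_gt_nhds (by linarith))
  have hev2 : ∀ᶠ x : ℝ in atTop,
      (∫ ω, max (S ω - Real.exp x) 0 ∂μ) < stdNormalCDF (-k) / 2 :=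
    h2.eventually (eventually_lt_nhds (by linarith))
  have hst : Tendsto (fun x : ℝ => Real.sqrt (2 * x / T)) atTop atTop := by
    have h := tendsto_sqrt_two_mul.comp (tendsto_id.atTop_div_const hT)
    refine h.congr fun x => ?_
    simp only [Function.comp, id]
    congr 1
    ring
  have hev3 : ∀ᶠ x : ℝ in atTop, 0 < Real.sqrt (2 * x / T) - c :=
    (hst.eventually_gt_atTop c).mono fun x hx => sub_pos.2 hx
  filter_upwards [hev1, hev2, hev3, eventually_ge_atTop x₀] with x h1x h2x h3x h4x
  have hCeq : CBS T x (I x) = ∫ ω, max (S ω - Real.exp x) 0 ∂μ := by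
    rw [hI x h4x, hαm, add_zero]
  have hlt : CBS T x (I x) < CBS T x (Real.sqrt (2 * x / T) - c) := by
    rw [hCeq]; linarith
  have hIlt : I x < Real.sqrt (2 * x / T) - c := by
    by_contra h
    push_neg at h
    exact absurd (CBS_mono T x hT h3x h) (not_le.2 hlt)
  linarith
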